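/- The multivariate noncommutative Hall-Littlewood functions satisfy the product formula H_α · H_β = Σ_{γ ≼ β} (∏_{i ∈ D(β)∖D(γ)} (tᵢ - t_{|α|+i})) · (H_{αγ} + (1 - t_{|α|}) H_{α▷γ}). -/

import Mathlib

noncomputable section

/-- Coefficient ring `ℚ[t₁, t₂, …]` (with `tᵢ = X i`). -/
abbrev R12 : Type := MvPolynomial ℕ ℚ

/-- `NSym[t₁, t₂, …]`, modeled as the free associative algebra over `ℚ[t₁,…]` on the
generators `h₁, h₂, …`. -/
abbrev NS : Type := FreeAlgebra R12 ℕ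

/-- The generator `h_i`. -/
def hgen (i : ℕ) : NS := FreeAlgebra.ι R12 i

/-- `h_α = h_{α₁} ⋯ h_{α_ℓ}`. -/
def hprod (α : List ℕ) : NS := (α.map hgen).prod

/-- The coarsening `β ≼ α` of `α` determined by a composition `c` of `ℓ(α)`. -/
def coarsen (α : List ℕ) (c : Composition α.length) : List ℕ :=
  (α.splitWrtComposition c).map List.sum

/-- The descent set `D(α)` of a composition, the set of proper nonzero partial sums. -/
def Dlist (α : List ℕ) : Finset ℕ :=
  Finset.image (fun j => (α.take j).sum) (Finset.Ioo 0 α.length)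

/-- The noncommutative ribbon Schur function `s_α`. -/
def ribbon (α : List ℕ) : NS :=
  ∑ c : Composition α.length,
    ((-1 : R12) ^ (α.length - c.length)) • hprod (coarsen α c)

/-- The multivariate noncommutative Hall-Littlewood function
`H_α = Σ_{β ≼ α} t^{D(α)∖D(β)} s_β`. -/
def HL (α : List ℕ) : NS :=
  ∑ c : Composition α.length,
    (∏ i ∈ Dlist α \ Dlist (coarsen α c), MvPolynomial.X i : R12) •
      ribbon (coarsen α c)

/-- The near-concatenation `α ▷ β`. -/
def nearConcat (α β : List ℕ) : List ℕ :=
  α.dropLast ++ (α.getLast! + β.headI) :: β.tail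


namespace NSymAux
open Finset MvPolynomial

def diffs : ℕ → List ℕ → List ℕ
  | _, [] => []
  | a, b :: l => (b - a) :: diffs b l

def listOf (n : ℕ) (S : Finset ℕ) : List ℕ := diffs 0 ((insert n S).sort (· ≤ ·))





lemma take_sum_lt {l : List ℕ} (hl : ∀ x ∈ l, 0 < x) {i j : ℕ}
    (hij : i < j) (hj : j ≤ l.length) : (l.take i).sum < (l.take j).sum := by
  induction j with
  | zero => omega
  | succ k ih =>
    have hk : k < l.length := by omega
    rw [List.sum_take_succ _ _ hk]
    rcases Nat.lt_or_ge i k with h | h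
    · exact lt_of_lt_of_le (ih h (le_of_lt hk)) (Nat.le_add_right _ _)
    · have : i = k := by omega
      subst this
      have := hl _ (List.getElem_mem hk)
      omega

lemma mem_Dlist {l : List ℕ} {x : ℕ} :
    x ∈ Dlist l ↔ ∃ j, 0 < j ∧ j < l.length ∧ (l.take j).sum = x := by
  simp [Dlist, Finset.mem_image, Finset.mem_Ioo, and_assoc]

lemma sum_pos_of_pos {l : List ℕ} (hl : ∀ x ∈ l, 0 < x) (h0 : l ≠ []) : 0 < l.sum := by
  cases l with
  | nil => exact absurd rfl h0
  | cons x l => have := hl x (by simp); simp [List.sum_cons]; omega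

lemma Dlist_subset_Ioo {l : List ℕ} (hl : ∀ x ∈ l, 0 < x) :
    Dlist l ⊆ Finset.Ioo 0 l.sum := by
  intro x hx
  obtain ⟨j, hj0, hj, rfl⟩ := mem_Dlist.1 hx
  have h1 : (l.take 0).sum < (l.take j).sum := take_sum_lt hl hj0 (le_of_lt hj)
  have h2 : (l.take j).sum < (l.take l.length).sum := take_sum_lt hl hj le_rfl
  simp only [List.take_length] at h2
  simpa using ⟨by simpa using h1, h2⟩

lemma take_sum_injOn {l : List ℕ} (hl : ∀ x ∈ l, 0 < x) :
    Set.InjOn (fun j => (l.take j).sum) (Finset.Ioo 0 l.length) := by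
  intro i hi j hj hij
  simp only [Finset.coe_Ioo, Set.mem_Ioo] at hi hj
  simp only at hij
  rcases lt_trichotomy i j with h | h | h
  · have := take_sum_lt hl h (le_of_lt hj.2); omega
  · exact h
  · have := take_sum_lt hl h (le_of_lt hi.2); omega

lemma card_Dlist {l : List ℕ} (hl : ∀ x ∈ l, 0 < x) :
    (Dlist l).card = l.length - 1 := by
  rw [Dlist, Finset.card_image_of_injOn (take_sum_injOn hl), Nat.card_Ioo]
  omega

lemma Dlist_nil : Dlist [] = ∅ := by simp [Dlist]

lemma Dlist_single (x : ℕ) : Dlist [x] = ∅ := by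
  simp only [Dlist, List.length_cons, List.length_nil]
  rw [show Finset.Ioo 0 1 = ∅ by decide]
  simp

lemma Dlist_cons {x : ℕ} {l : List ℕ} (hl : l ≠ []) :
    Dlist (x :: l) = insert x ((Dlist l).image (x + ·)) := by
  ext y
  simp only [mem_Dlist, Finset.mem_insert, Finset.mem_image]
  constructor
  · rintro ⟨j, hj0, hj, rfl⟩
    obtain ⟨k, rfl⟩ : ∃ k, j = k + 1 := ⟨j - 1, by omega⟩
    rcases Nat.eq_zero_or_pos k with rfl | hk
    · left; simp
    · right
      refine ⟨(l.take k).sum, ⟨k, hk, by simpa using hj, rfl⟩, by simp⟩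
  · rintro (rfl | ⟨z, hz, rfl⟩)
    · exact ⟨1, one_pos, by simpa using List.length_pos_iff.2 hl, by simp⟩
    · obtain ⟨k, hk0, hk, rfl⟩ := hz
      exact ⟨k + 1, by omega, by simpa using hk, by simp⟩

lemma Dlist_append {γ δ : List ℕ} (hγ : γ ≠ []) (hδ : δ ≠ []) :
    Dlist (γ ++ δ) = Dlist γ ∪ insert γ.sum ((Dlist δ).image (γ.sum + ·)) := by
  induction γ with
  | nil => exact absurd rfl hγ
  | cons x γ' ih =>
    rcases eq_or_ne γ' [] with rfl | hγ'
    · simp only [List.nil_append, List.singleton_append, List.sum_cons, List.sum_nil, add_zero]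
      rw [Dlist_cons hδ, Dlist_single]
      simp [Finset.union_comm]
    · have hγδ : γ' ++ δ ≠ [] := by simp [hγ']
      rw [List.cons_append, Dlist_cons hγδ, ih hγ', Dlist_cons hγ']
      ext z
      simp only [List.sum_cons, Finset.mem_insert, Finset.mem_union, Finset.mem_image,
        add_assoc]
      constructor
      · rintro (rfl | ⟨w, (hw | rfl | ⟨u, hu, rfl⟩), rfl⟩)
        · exact Or.inl (Or.inl rfl)
        · exact Or.inl (Or.inr ⟨w, hw, rfl⟩)
        · exact Or.inr (Or.inl rfl)
        · exact Or.inr (Or.inr ⟨u, hu, rfl⟩)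
      · rintro ((rfl | ⟨w, hw, rfl⟩) | rfl | ⟨u, hu, rfl⟩)
        · exact Or.inl rfl
        · exact Or.inr ⟨w, Or.inl hw, rfl⟩
        · exact Or.inr ⟨γ'.sum, Or.inr (Or.inl rfl), rfl⟩
        · exact Or.inr ⟨γ'.sum + u, Or.inr (Or.inr ⟨u, hu, rfl⟩), rfl⟩

lemma Dlist_snoc {γ : List ℕ} (hγ : γ ≠ []) (x : ℕ) :
    Dlist (γ ++ [x]) = insert γ.sum (Dlist γ) := by
  rw [Dlist_append hγ (by simp), Dlist_single]
  rw [Finset.image_empty]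
  ext z
  simp





lemma sort_insert_max {s : Finset ℕ} {b : ℕ} (hb : ∀ x ∈ s, x < b) :
    (insert b s).sort (· ≤ ·) = s.sort (· ≤ ·) ++ [b] := by
  have hbs : b ∉ s := fun h => lt_irrefl b (hb b h)
  refine (fun hp (h2 : List.Pairwise (· ≤ ·) (s.sort (· ≤ ·) ++ [b])) => List.Perm.eq_of_pairwise' (Finset.pairwise_sort _ _) h2 hp) ?_ ?_
  · refine Multiset.coe_eq_coe.1 ?_
    have : ((s.sort (· ≤ ·) ++ [b] : List ℕ) : Multiset ℕ)
        = (s.sort (· ≤ ·) : List ℕ) + ([b] : List ℕ) := rfl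
    rw [this, Finset.sort_eq, Finset.sort_eq, Finset.insert_val,
      Multiset.ndinsert_of_notMem hbs, Multiset.coe_singleton]
    rw [add_comm, ← Multiset.singleton_add]
  · rw [List.pairwise_append]
    refine ⟨Finset.pairwise_sort _ _, List.pairwise_singleton _ _, ?_⟩
    intro a ha b' hb'
    rw [List.mem_singleton] at hb'
    subst hb'
    exact le_of_lt (hb a (Finset.mem_sort _ |>.1 ha))

lemma diffs_append_last (m n : ℕ) : ∀ (L : List ℕ) (a : ℕ),
    diffs a ((L ++ [m]) ++ [n]) = diffs a (L ++ [m]) ++ [n - m]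
  | [], _ => rfl
  | x :: L, a => by
    simp only [List.cons_append, diffs]
    rw [diffs_append_last m n L x]

lemma listOf_empty (n : ℕ) : listOf n ∅ = [n] := by
  simp [listOf, Finset.sort_singleton, diffs]

lemma listOf_max_step {n m : ℕ} {S : Finset ℕ} (hm : m ∈ S) (hmax : ∀ x ∈ S, x ≤ m)
    (hn : ∀ x ∈ S, x < n) :
    listOf n S = listOf m (S.erase m) ++ [n - m] := by
  have herase : ∀ x ∈ S.erase m, x < m := fun x hx =>
    lt_of_le_of_ne (hmax x (Finset.mem_of_mem_erase hx)) (Finset.ne_of_mem_erase hx)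
  have h2 : S.sort (· ≤ ·) = (S.erase m).sort (· ≤ ·) ++ [m] := by
    conv_lhs => rw [← Finset.insert_erase hm]
    exact sort_insert_max herase
  have h1 : (insert n S).sort (· ≤ ·) = S.sort (· ≤ ·) ++ [n] := sort_insert_max hn
  have h3 : (insert m (S.erase m)).sort (· ≤ ·) = (S.erase m).sort (· ≤ ·) ++ [m] :=
    sort_insert_max herase
  rw [listOf, listOf, h1, h2, h3, diffs_append_last]

lemma listOf_spec (S : Finset ℕ) : ∀ {n : ℕ}, 0 < n → S ⊆ Finset.Ioo 0 n →
    (∀ x ∈ listOf n S, 0 < x) ∧ listOf n S ≠ [] ∧ (listOf n S).sum = n ∧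
      Dlist (listOf n S) = S := by
  induction S using Finset.strongInduction with
  | _ S ih =>
    intro n hn hS
    rcases S.eq_empty_or_nonempty with rfl | hSne
    · rw [listOf_empty]
      exact ⟨by simpa using hn, by simp, by simp, Dlist_single n⟩
    · set m := S.max' hSne with hm
      have hmS : m ∈ S := S.max'_mem hSne
      have hmax : ∀ x ∈ S, x ≤ m := fun x hx => S.le_max' x hx
      have hmIoo := Finset.mem_Ioo.1 (hS hmS)
      have hn' : ∀ x ∈ S, x < n := fun x hx => (Finset.mem_Ioo.1 (hS hx)).2
      rw [listOf_max_step hmS hmax hn']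
      have hsub : S.erase m ⊆ Finset.Ioo 0 m := by
        intro x hx
        have h1 := Finset.mem_of_mem_erase hx
        have h2 := Finset.mem_Ioo.1 (hS h1)
        exact Finset.mem_Ioo.2 ⟨h2.1, lt_of_le_of_ne (hmax x h1) (Finset.ne_of_mem_erase hx)⟩
      obtain ⟨p1, p2, p3, p4⟩ := ih (S.erase m) (Finset.erase_ssubset hmS) hmIoo.1 hsub
      refine ⟨?_, by simp, ?_, ?_⟩
      · intro x hx
        rcases List.mem_append.1 hx with h | h
        · exact p1 x h
        · simp only [List.mem_singleton] at h; omega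
      · rw [List.sum_append, p3]; simp; omega
      · rw [Dlist_snoc p2, p3, p4, Finset.insert_erase hmS]

lemma listOf_recover {l : List ℕ} (hl : ∀ x ∈ l, 0 < x) (h0 : l ≠ []) :
    listOf l.sum (Dlist l) = l := by
  induction l using List.reverseRecOn with
  | nil => exact absurd rfl h0
  | append_singleton γ x ih =>
    have hx : 0 < x := hl x (by simp)
    rcases eq_or_ne γ [] with rfl | hγ
    · simp only [List.nil_append, List.sum_cons, List.sum_nil, add_zero]
      rw [Dlist_single, listOf_empty]
    · have hγpos : ∀ y ∈ γ, 0 < y := fun y hy => hl y (by simp [hy])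
      have hDsub := Dlist_subset_Ioo hγpos
      rw [Dlist_snoc hγ]
      have hmax : ∀ y ∈ insert γ.sum (Dlist γ), y ≤ γ.sum := by
        intro y hy
        rcases Finset.mem_insert.1 hy with rfl | hy'
        · exact le_rfl
        · exact le_of_lt (Finset.mem_Ioo.1 (hDsub hy')).2
      have hlt : ∀ y ∈ insert γ.sum (Dlist γ), y < (γ ++ [x]).sum := by
        intro y hy
        have := hmax y hy
        simp only [List.sum_append, List.sum_cons, List.sum_nil, add_zero]
        omega
      rw [listOf_max_step (Finset.mem_insert_self _ _) hmax hlt]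
      have hnotmem : γ.sum ∉ Dlist γ := by
        intro h
        exact absurd (Finset.mem_Ioo.1 (hDsub h)).2 (lt_irrefl _)
      rw [Finset.erase_insert hnotmem, ih hγpos hγ]
      simp only [List.sum_append, List.sum_cons, List.sum_nil, add_zero]
      congr 2
      omega





variable {α : List ℕ}

lemma coarsen_sum (c : Composition α.length) : (coarsen α c).sum = α.sum := by
  rw [coarsen, ← List.sum_flatten, List.flatten_splitWrtComposition]

lemma coarsen_length (c : Composition α.length) : (coarsen α c).length = c.length := by
  rw [coarsen, List.length_map, List.length_splitWrtComposition]

lemma coarsen_pos (hα : ∀ x ∈ α, 0 < x) (c : Composition α.length) :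
    ∀ x ∈ coarsen α c, 0 < x := by
  intro x hx
  rw [coarsen, List.mem_map] at hx
  obtain ⟨chunk, hchunk, rfl⟩ := hx
  have hlen : chunk.length ∈ c.blocks := by
    rw [← List.map_length_splitWrtComposition α c]
    exact List.mem_map_of_mem hchunk
  have hpos : 0 < chunk.length := c.blocks_pos hlen
  obtain ⟨y, hy⟩ := List.exists_mem_of_length_pos hpos
  have hyα : y ∈ α := by
    rw [← List.flatten_splitWrtComposition α c]
    exact List.mem_flatten.2 ⟨chunk, hchunk, hy⟩
  calc 0 < y := hα y hyα
    _ ≤ chunk.sum := List.single_le_sum (fun _ _ => Nat.zero_le _) _ hy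

lemma comp_length_pos (hα0 : α ≠ []) (c : Composition α.length) : 0 < c.length := by
  by_contra h
  push_neg at h
  interval_cases hc : c.length
  have := c.blocks_sum
  have hb : c.blocks = [] := List.length_eq_zero_iff.1 hc
  rw [hb] at this
  simp at this
  exact hα0 (List.length_eq_zero_iff.1 this.symm)

lemma coarsen_ne_nil (hα0 : α ≠ []) (c : Composition α.length) : coarsen α c ≠ [] := by
  intro h
  have := coarsen_length c
  rw [h] at this
  simp only [List.length_nil] at this
  have hp := comp_length_pos hα0 c
  omega

lemma psum_coarsen (c : Composition α.length) (j : ℕ) :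
    ((coarsen α c).take j).sum = (α.take (c.sizeUpTo j)).sum := by
  rw [coarsen, ← List.map_take, ← List.sum_flatten]
  congr 1
  have := List.take_sum_flatten (α.splitWrtComposition c) j
  rw [List.map_length_splitWrtComposition, List.flatten_splitWrtComposition] at this
  rw [← this]
  rfl

lemma sizeUpTo_mem_Ioo (hα0 : α ≠ []) (c : Composition α.length) {j : ℕ}
    (hj : j ∈ Finset.Ioo 0 c.length) : c.sizeUpTo j ∈ Finset.Ioo 0 α.length := by
  rw [Finset.mem_Ioo] at hj ⊢
  constructor
  · have h0 : c.sizeUpTo 0 < c.sizeUpTo 1 := c.sizeUpTo_strict_mono (by omega)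
    have := c.monotone_sizeUpTo (show 1 ≤ j by omega)
    rw [Composition.sizeUpTo_zero] at h0
    omega
  · have h1 : c.sizeUpTo j < c.sizeUpTo (j + 1) := c.sizeUpTo_strict_mono hj.2
    have h2 : c.sizeUpTo (j + 1) ≤ c.sizeUpTo c.length := c.monotone_sizeUpTo (by omega)
    rw [Composition.sizeUpTo_length] at h2
    omega

lemma Dlist_coarsen (c : Composition α.length) :
    Dlist (coarsen α c) =
      (Finset.Ioo 0 c.length).image (fun j => (α.take (c.sizeUpTo j)).sum) := by
  rw [Dlist, coarsen_length]
  exact Finset.image_congr (fun j _ => psum_coarsen c j)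

lemma Dlist_coarsen_subset (hα0 : α ≠ []) (c : Composition α.length) :
    Dlist (coarsen α c) ⊆ Dlist α := by
  rw [Dlist_coarsen, Dlist]
  intro x hx
  rw [Finset.mem_image] at hx ⊢
  obtain ⟨j, hj, rfl⟩ := hx
  exact ⟨c.sizeUpTo j, sizeUpTo_mem_Ioo hα0 c hj, rfl⟩

lemma coarsen_injective (hα : ∀ x ∈ α, 0 < x) :
    Function.Injective (coarsen α) := by
  intro c₁ c₂ h
  have hlen : c₁.length = c₂.length := by
    rw [← coarsen_length c₁, h, coarsen_length]
  have hsz : ∀ j, c₁.sizeUpTo j = c₂.sizeUpTo j := by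
    intro j
    rcases le_or_gt c₁.length j with hj | hj
    · rw [Composition.sizeUpTo_ofLength_le _ _ hj,
        Composition.sizeUpTo_ofLength_le _ _ (hlen ▸ hj)]
    · have h1 : (α.take (c₁.sizeUpTo j)).sum = (α.take (c₂.sizeUpTo j)).sum := by
        rw [← psum_coarsen, ← psum_coarsen, h]
      by_contra hne
      have hle₁ : c₁.sizeUpTo j ≤ α.length := c₁.sizeUpTo_le j
      have hle₂ : c₂.sizeUpTo j ≤ α.length := c₂.sizeUpTo_le j
      rcases lt_trichotomy (c₁.sizeUpTo j) (c₂.sizeUpTo j) with hlt | heq | hlt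
      · have := take_sum_lt hα hlt hle₂; omega
      · exact hne heq
      · have := take_sum_lt hα hlt hle₁; omega
  apply Composition.ext
  apply List.ext_getElem (by simpa [Composition.length] using hlen)
  intro i h1 h2
  have e1 := hsz (i + 1)
  have e2 := hsz i
  rw [Composition.sizeUpTo_succ _ h1, Composition.sizeUpTo_succ _ (by
    simpa [Composition.length, ← hlen] using h2)] at e1
  omega

lemma exists_coarsen (hα : ∀ x ∈ α, 0 < x) (hα0 : α ≠ []) {S : Finset ℕ}
    (hS : S ⊆ Dlist α) : ∃ c : Composition α.length, Dlist (coarsen α c) = S := by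
  classical
  set I := (Finset.Ioo 0 α.length).filter (fun j => (α.take j).sum ∈ S) with hI
  have hIsub : I ⊆ Finset.Ioo 0 α.length := Finset.filter_subset _ _
  have hlen : 0 < α.length := List.length_pos_iff.2 hα0
  obtain ⟨hpos, hne, hsum, hD⟩ := listOf_spec I hlen hIsub
  set c : Composition α.length := ⟨listOf α.length I, fun h => hpos _ h, hsum⟩ with hc
  refine ⟨c, ?_⟩
  rw [Dlist_coarsen]
  have hszim : (Finset.Ioo 0 c.length).image c.sizeUpTo = I := by
    have : c.length = (listOf α.length I).length := rfl
    rw [← hD, Dlist]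
    apply Finset.image_congr
    intro j _
    rfl
  rw [show (fun j => (α.take (c.sizeUpTo j)).sum)
      = (fun i => (α.take i).sum) ∘ c.sizeUpTo from rfl]
  rw [← Finset.image_image, hszim]
  ext x
  simp only [Finset.mem_image, hI, Finset.mem_filter]
  constructor
  · rintro ⟨j, ⟨_, hj⟩, rfl⟩; exact hj
  · intro hx
    obtain ⟨j, hj, rfl⟩ := Finset.mem_image.1 (hS hx)
    exact ⟨j, ⟨hj, hx⟩, rfl⟩

lemma sum_comp_eq_sum_powerset {M : Type*} [AddCommMonoid M]
    (hα : ∀ x ∈ α, 0 < x) (hα0 : α ≠ []) (f : List ℕ → M) :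
    ∑ c : Composition α.length, f (coarsen α c)
      = ∑ S ∈ (Dlist α).powerset, f (listOf α.sum S) := by
  have hrec : ∀ c : Composition α.length,
      listOf α.sum (Dlist (coarsen α c)) = coarsen α c := by
    intro c
    rw [← coarsen_sum c]
    exact listOf_recover (coarsen_pos hα c) (coarsen_ne_nil hα0 c)
  refine Finset.sum_bij (fun c _ => Dlist (coarsen α c)) ?_ ?_ ?_ ?_
  · intro c _
    exact Finset.mem_powerset.2 (Dlist_coarsen_subset hα0 c)
  · intro c₁ _ c₂ _ h
    apply coarsen_injective hα
    rw [← hrec c₁, h, hrec c₂]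
  · intro S hS
    obtain ⟨c, hc⟩ := exists_coarsen hα hα0 (Finset.mem_powerset.1 hS)
    exact ⟨c, Finset.mem_univ _, hc⟩
  · intro c _
    rw [hrec c]





lemma image_add_add (a b : ℕ) (s : Finset ℕ) :
    (s.image (b + ·)).image (a + ·) = s.image ((a + b) + ·) := by
  rw [Finset.image_image]
  exact Finset.image_congr (fun x _ => by simp [Function.comp, add_assoc])

lemma nearConcat_eq (γ' : List ℕ) (x y : ℕ) (δ' : List ℕ) :
    nearConcat (γ' ++ [x]) (y :: δ') = γ' ++ (x + y) :: δ' := by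
  have h : (γ' ++ [x]).getLast! = x := List.getLast!_of_getLast? List.getLast?_concat
  rw [nearConcat, List.dropLast_concat, h, List.tail_cons]
  rfl

lemma Dlist_snoc_irrel (γ' : List ℕ) (u v : ℕ) :
    Dlist (γ' ++ [u]) = Dlist (γ' ++ [v]) := by
  rcases eq_or_ne γ' [] with rfl | h
  · simp only [List.nil_append, Dlist_single]
  · rw [Dlist_snoc h, Dlist_snoc h]

lemma nearConcat_spec {γ δ : List ℕ} (hγ : ∀ x ∈ γ, 0 < x) (hγ0 : γ ≠ [])
    (hδ : ∀ x ∈ δ, 0 < x) (hδ0 : δ ≠ []) :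
    (∀ x ∈ nearConcat γ δ, 0 < x) ∧ nearConcat γ δ ≠ [] ∧
      (nearConcat γ δ).sum = γ.sum + δ.sum ∧
      Dlist (nearConcat γ δ) = Dlist γ ∪ (Dlist δ).image (γ.sum + ·) := by
  obtain rfl | ⟨γ', x, rfl⟩ := γ.eq_nil_or_concat
  · exact absurd rfl hγ0
  simp only [List.concat_eq_append] at hγ hγ0 ⊢
  cases δ with
  | nil => exact absurd rfl hδ0
  | cons y δ' =>
    rw [nearConcat_eq]
    have hx : 0 < x := hγ x (by simp)
    refine ⟨?_, by simp, ?_, ?_⟩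
    · intro z hz
      rcases List.mem_append.1 hz with h | h
      · exact hγ z (by simp [h])
      · rcases List.mem_cons.1 h with rfl | h'
        · omega
        · exact hδ z (by simp [h'])
    · simp only [List.sum_append, List.sum_cons, List.sum_nil]
      omega
    · rcases eq_or_ne δ' [] with rfl | hδ'
      · rw [show γ' ++ (x + y) :: ([] : List ℕ) = γ' ++ [x + y] from rfl,
          Dlist_snoc_irrel γ' (x + y) x,
          show (y :: ([] : List ℕ)) = [y] from rfl, Dlist_single]
        simp only [Finset.image_empty, Finset.union_empty]
      · rw [show γ' ++ (x + y) :: δ' = (γ' ++ [x + y]) ++ δ' by simp,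
          Dlist_append (by simp) hδ', Dlist_cons hδ', Finset.image_insert,
          image_add_add, Dlist_snoc_irrel γ' (x + y) x]
        have h1 : (γ' ++ [x + y]).sum = (γ' ++ [x]).sum + y := by
          simp [List.sum_append]; omega
        rw [h1]

lemma powerset_sum_swap {M : Type*} [AddCommMonoid M] (D : Finset ℕ)
    (F : Finset ℕ → Finset ℕ → M) :
    ∑ S ∈ D.powerset, ∑ T ∈ S.powerset, F S T
      = ∑ T ∈ D.powerset, ∑ U ∈ (D \ T).powerset, F (T ∪ U) T := by
  classical
  rw [Finset.sum_sigma', Finset.sum_sigma']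
  refine Finset.sum_nbij' (fun p => ⟨p.2, p.1 \ p.2⟩) (fun q => ⟨q.1 ∪ q.2, q.1⟩)
    ?_ ?_ ?_ ?_ ?_
  · rintro ⟨S, T⟩ hp
    simp only [Finset.mem_sigma, Finset.mem_powerset] at hp ⊢
    exact ⟨hp.2.trans hp.1, Finset.sdiff_subset_sdiff hp.1 le_rfl⟩
  · rintro ⟨T, U⟩ hq
    simp only [Finset.mem_sigma, Finset.mem_powerset] at hq ⊢
    refine ⟨Finset.union_subset hq.1 (hq.2.trans (Finset.sdiff_subset)), Finset.subset_union_left⟩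
  · rintro ⟨S, T⟩ hp
    simp only [Finset.mem_sigma, Finset.mem_powerset] at hp
    simp only [Sigma.mk.inj_iff, heq_eq_eq]
    exact ⟨Finset.union_sdiff_of_subset hp.2, trivial⟩
  · rintro ⟨T, U⟩ hq
    simp only [Finset.mem_sigma, Finset.mem_powerset] at hq
    simp only [Sigma.mk.inj_iff, heq_eq_eq]
    refine ⟨trivial, ?_⟩
    rw [Finset.union_sdiff_cancel_left]
    exact Finset.disjoint_left.2 (fun a haT haU => (Finset.mem_sdiff.1 (hq.2 haU)).2 haT)
  · rintro ⟨S, T⟩ hp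
    simp only [Finset.mem_sigma, Finset.mem_powerset] at hp
    simp only
    rw [Finset.union_sdiff_of_subset hp.2]

lemma powerset_union_sum {M : Type*} [AddCommMonoid M] {A B : Finset ℕ}
    (hAB : Disjoint A B) (f : Finset ℕ → M) :
    ∑ T ∈ (A ∪ B).powerset, f T = ∑ T₁ ∈ A.powerset, ∑ T₂ ∈ B.powerset, f (T₁ ∪ T₂) := by
  classical
  rw [Finset.sum_sigma']
  refine (Finset.sum_nbij' (fun T => (⟨T ∩ A, T ∩ B⟩ : Σ _ : Finset ℕ, Finset ℕ))
    (fun q => q.1 ∪ q.2) ?_ ?_ ?_ ?_ ?_)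
  · intro T hT
    simp only [Finset.mem_powerset, Finset.mem_sigma] at hT ⊢
    exact ⟨Finset.inter_subset_right, Finset.inter_subset_right⟩
  · rintro ⟨T₁, T₂⟩ hq
    simp only [Finset.mem_sigma, Finset.mem_powerset] at hq ⊢
    exact Finset.union_subset (hq.1.trans Finset.subset_union_left)
      (hq.2.trans Finset.subset_union_right)
  · intro T hT
    simp only [Finset.mem_powerset] at hT
    simp only
    rw [← Finset.inter_union_distrib_left, Finset.inter_eq_left.2 hT]
  · rintro ⟨T₁, T₂⟩ hq
    simp only [Finset.mem_sigma, Finset.mem_powerset] at hq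
    simp only [Sigma.mk.inj_iff, heq_eq_eq]
    constructor
    · have hd : T₂ ∩ A = ∅ := by
        apply Finset.eq_empty_of_forall_notMem
        intro a ha
        rw [Finset.mem_inter] at ha
        exact (Finset.disjoint_left.1 hAB ha.2) (hq.2 ha.1)
      rw [Finset.union_inter_distrib_right, Finset.inter_eq_left.2 hq.1, hd, Finset.union_empty]
    · have hd : T₁ ∩ B = ∅ := by
        apply Finset.eq_empty_of_forall_notMem
        intro a ha
        rw [Finset.mem_inter] at ha
        exact (Finset.disjoint_left.1 hAB (hq.1 ha.1)) ha.2
      rw [Finset.union_inter_distrib_right, Finset.inter_eq_left.2 hq.2, hd, Finset.empty_union]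
  · intro T hT
    simp only [Finset.mem_powerset] at hT
    simp only
    rw [← Finset.inter_union_distrib_left, Finset.inter_eq_left.2 hT]





lemma hprod_append (γ δ : List ℕ) : hprod (γ ++ δ) = hprod γ * hprod δ := by
  rw [hprod, hprod, hprod, List.map_append, List.prod_append]

lemma listOf_spec' {α : List ℕ} (hα : ∀ x ∈ α, 0 < x) (hα0 : α ≠ []) {S : Finset ℕ}
    (hS : S ⊆ Dlist α) :
    (∀ x ∈ listOf α.sum S, 0 < x) ∧ listOf α.sum S ≠ [] ∧
      (listOf α.sum S).sum = α.sum ∧ Dlist (listOf α.sum S) = S :=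
  listOf_spec S (sum_pos_of_pos hα hα0) (hS.trans (Dlist_subset_Ioo hα))

lemma length_eq_card {l : List ℕ} (hl : ∀ x ∈ l, 0 < x) (h0 : l ≠ []) :
    l.length = (Dlist l).card + 1 := by
  have h1 := card_Dlist hl
  have h2 : 0 < l.length := List.length_pos_iff.2 h0
  omega

lemma HL_eq_powerset {α : List ℕ} (hα : ∀ x ∈ α, 0 < x) (hα0 : α ≠ []) :
    HL α = ∑ S ∈ (Dlist α).powerset,
      (∏ i ∈ Dlist α \ S, (X i : R12)) • ribbon (listOf α.sum S) := by
  rw [HL, sum_comp_eq_sum_powerset hα hα0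
    (fun γ => (∏ i ∈ Dlist α \ Dlist γ, (X i : R12)) • ribbon γ)]
  refine Finset.sum_congr rfl (fun S hS => ?_)
  rw [(listOf_spec' hα hα0 (Finset.mem_powerset.1 hS)).2.2.2]

lemma ribbon_eq_powerset {γ : List ℕ} (hγ : ∀ x ∈ γ, 0 < x) (hγ0 : γ ≠ []) :
    ribbon γ = ∑ T ∈ (Dlist γ).powerset,
      ((-1 : R12) ^ ((Dlist γ).card - T.card)) • hprod (listOf γ.sum T) := by
  rw [ribbon]
  have h := sum_comp_eq_sum_powerset hγ hγ0
    (fun δ => ((-1 : R12) ^ (γ.length - δ.length)) • hprod δ)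
  have step1 : ∀ c : Composition γ.length,
      ((-1 : R12) ^ (γ.length - c.length)) • hprod (coarsen γ c)
        = ((-1 : R12) ^ (γ.length - (coarsen γ c).length)) • hprod (coarsen γ c) := by
    intro c
    rw [coarsen_length]
  rw [Finset.sum_congr rfl (fun c _ => step1 c), h]
  refine Finset.sum_congr rfl (fun T hT => ?_)
  obtain ⟨p1, p2, p3, p4⟩ := listOf_spec' hγ hγ0 (Finset.mem_powerset.1 hT)
  congr 2
  have e1 := length_eq_card p1 p2
  rw [p4] at e1
  have e2 := length_eq_card hγ hγ0
  have hcard : T.card ≤ (Dlist γ).card :=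
    Finset.card_le_card (Finset.mem_powerset.1 hT)
  omega

lemma binom_expand (E : Finset ℕ) (f g : ℕ → R12) :
    ∑ U ∈ E.powerset, (∏ i ∈ U, f i) * ∏ i ∈ E \ U, g i
      = ∏ i ∈ E, (f i + g i) := (Finset.prod_add f g E).symm

lemma HL_h {α : List ℕ} (hα : ∀ x ∈ α, 0 < x) (hα0 : α ≠ []) :
    HL α = ∑ T ∈ (Dlist α).powerset,
      (∏ i ∈ Dlist α \ T, ((X i : R12) - 1)) • hprod (listOf α.sum T) := by
  rw [HL_eq_powerset hα hα0]
  have step1 : ∀ S ∈ (Dlist α).powerset,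
      (∏ i ∈ Dlist α \ S, (X i : R12)) • ribbon (listOf α.sum S)
        = ∑ T ∈ S.powerset,
            ((∏ i ∈ Dlist α \ S, (X i : R12)) * (-1) ^ (S.card - T.card))
              • hprod (listOf α.sum T) := by
    intro S hS
    obtain ⟨p1, p2, p3, p4⟩ := listOf_spec' hα hα0 (Finset.mem_powerset.1 hS)
    rw [ribbon_eq_powerset p1 p2, p3, p4, Finset.smul_sum]
    exact Finset.sum_congr rfl (fun T _ => by rw [smul_smul])
  have hswap := powerset_sum_swap (Dlist α) (fun S T =>
    ((∏ i ∈ Dlist α \ S, (X i : R12)) * (-1) ^ (S.card - T.card))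
      • hprod (listOf α.sum T))
  rw [Finset.sum_congr rfl step1, hswap]
  refine Finset.sum_congr rfl (fun T hT => ?_)
  rw [← Finset.sum_smul]
  congr 1
  have hTD := Finset.mem_powerset.1 hT
  have key : ∀ U ∈ (Dlist α \ T).powerset,
      (∏ i ∈ Dlist α \ (T ∪ U), (X i : R12)) * (-1) ^ ((T ∪ U).card - T.card)
        = (∏ i ∈ U, (-1 : R12)) * ∏ i ∈ (Dlist α \ T) \ U, (X i : R12) := by
    intro U hU
    have hUsub := Finset.mem_powerset.1 hU
    have hdisj : Disjoint T U := by
      refine Finset.disjoint_left.2 (fun x hxT hxU => ?_)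
      exact (Finset.mem_sdiff.1 (hUsub hxU)).2 hxT
    have h1 : Dlist α \ (T ∪ U) = (Dlist α \ T) \ U := by
      ext z
      simp only [Finset.mem_sdiff, Finset.mem_union, not_or]
      tauto
    have h2 : (T ∪ U).card = T.card + U.card := Finset.card_union_of_disjoint hdisj
    rw [h1, h2, Nat.add_sub_cancel_left, Finset.prod_const, mul_comm]
  rw [Finset.sum_congr rfl key, binom_expand (Dlist α \ T) (fun _ => (-1 : R12)) (fun i => X i)]
  exact Finset.prod_congr rfl (fun i _ => by ring)

lemma claimC (E : Finset ℕ) (a : ℕ) :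
    ∑ V ∈ E.powerset, (∏ j ∈ V, ((X (a + j) : R12) - 1)) * ∏ i ∈ E \ V, ((X i : R12) - X (a + i))
      = ∏ i ∈ E, ((X i : R12) - 1) := by
  rw [binom_expand]
  exact Finset.prod_congr rfl (fun i _ => by ring)

lemma insert_sum_combine (a : ℕ) (D₀ : Finset ℕ) (ha : a ∉ D₀) (h : Finset ℕ → NS) :
    (∑ T ∈ (insert a D₀).powerset, (∏ i ∈ insert a D₀ \ T, ((X i : R12) - 1)) • h T)
      + (1 - (X a : R12)) • ∑ T ∈ D₀.powerset, (∏ i ∈ D₀ \ T, ((X i : R12) - 1)) • h T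
    = ∑ T ∈ D₀.powerset, (∏ i ∈ D₀ \ T, ((X i : R12) - 1)) • h (insert a T) := by
  classical
  have hdisj : Disjoint D₀.powerset (D₀.powerset.image (insert a)) := by
    refine Finset.disjoint_left.2 (fun T hT hT' => ?_)
    obtain ⟨T₀, _, rfl⟩ := Finset.mem_image.1 hT'
    exact ha (Finset.mem_powerset.1 hT (Finset.mem_insert_self a T₀))
  have hinj : ∀ T₁ ∈ D₀.powerset, ∀ T₂ ∈ D₀.powerset,
      insert a T₁ = insert a T₂ → T₁ = T₂ := by
    intro T₁ h₁ T₂ h₂ he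
    have k₁ : a ∉ T₁ := fun hx => ha (Finset.mem_powerset.1 h₁ hx)
    have k₂ : a ∉ T₂ := fun hx => ha (Finset.mem_powerset.1 h₂ hx)
    rw [← Finset.erase_insert k₁, he, Finset.erase_insert k₂]
  rw [Finset.powerset_insert, Finset.sum_union hdisj, Finset.sum_image hinj]
  have e1 : ∀ T ∈ D₀.powerset,
      (∏ i ∈ insert a D₀ \ insert a T, ((X i : R12) - 1)) • h (insert a T)
        = (∏ i ∈ D₀ \ T, ((X i : R12) - 1)) • h (insert a T) := by
    intro T hT
    congr 2
    ext z
    simp only [Finset.mem_sdiff, Finset.mem_insert, not_or]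
    constructor
    · rintro ⟨rfl | hz, h1, h2⟩
      · exact absurd rfl h1
      · exact ⟨hz, h2⟩
    · rintro ⟨hz, h2⟩
      exact ⟨Or.inr hz, fun he => ha (he ▸ hz), h2⟩
  have e2 : ∀ T ∈ D₀.powerset,
      (∏ i ∈ insert a D₀ \ T, ((X i : R12) - 1)) • h T
        = (((X a : R12) - 1) * ∏ i ∈ D₀ \ T, ((X i : R12) - 1)) • h T := by
    intro T hT
    have haT : a ∉ T := fun hx => ha (Finset.mem_powerset.1 hT hx)
    have hset : insert a D₀ \ T = insert a (D₀ \ T) := by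
      ext z
      simp only [Finset.mem_sdiff, Finset.mem_insert]
      constructor
      · rintro ⟨rfl | hz, h2⟩
        · exact Or.inl rfl
        · exact Or.inr ⟨hz, h2⟩
      · rintro (rfl | ⟨hz, h2⟩)
        · exact ⟨Or.inl rfl, haT⟩
        · exact ⟨Or.inr hz, h2⟩
    rw [hset, Finset.prod_insert (fun hx => ha (Finset.mem_sdiff.1 hx).1)]
  rw [Finset.sum_congr rfl e1, Finset.sum_congr rfl e2, Finset.smul_sum]
  rw [add_right_comm]
  have e3 : ∀ T ∈ D₀.powerset,
      (1 - (X a : R12)) • ((∏ i ∈ D₀ \ T, ((X i : R12) - 1)) • h T)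
        = ((1 - (X a : R12)) * ∏ i ∈ D₀ \ T, ((X i : R12) - 1)) • h T := by
    intro T _
    rw [smul_smul]
  rw [Finset.sum_congr rfl e3, ← Finset.sum_add_distrib]
  have e4 : ∀ T ∈ D₀.powerset,
      ((((X a : R12) - 1) * ∏ i ∈ D₀ \ T, ((X i : R12) - 1)) • h T
        + ((1 - (X a : R12)) * ∏ i ∈ D₀ \ T, ((X i : R12) - 1)) • h T) = 0 := by
    intro T _
    rw [← add_smul, show (((X a : R12) - 1) * ∏ i ∈ D₀ \ T, ((X i : R12) - 1)
      + (1 - (X a : R12)) * ∏ i ∈ D₀ \ T, ((X i : R12) - 1)) = 0 by ring, zero_smul]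
  rw [Finset.sum_congr rfl e4, Finset.sum_const_zero, zero_add]

lemma sdiff_union_split {A B T₁ T₂ : Finset ℕ} (hAB : Disjoint A B) (h1 : T₁ ⊆ A)
    (h2 : T₂ ⊆ B) : (A ∪ B) \ (T₁ ∪ T₂) = (A \ T₁) ∪ (B \ T₂) := by
  ext z
  simp only [Finset.mem_sdiff, Finset.mem_union, not_or]
  constructor
  · rintro ⟨hz | hz, h3, h4⟩
    · exact Or.inl ⟨hz, h3⟩
    · exact Or.inr ⟨hz, h4⟩
  · rintro (⟨hz, h3⟩ | ⟨hz, h4⟩)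
    · exact ⟨Or.inl hz, h3, fun hzT₂ => (Finset.disjoint_left.1 hAB hz) (h2 hzT₂)⟩
    · exact ⟨Or.inr hz, fun hzT₁ => (Finset.disjoint_left.1 hAB (h1 hzT₁)) hz, h4⟩

lemma shift_unshift {a : ℕ} {S T : Finset ℕ} (hT : T ⊆ S.image (a + ·)) :
    (T.image (fun x => x - a)).image (a + ·) = T := by
  ext z
  simp only [Finset.image_image, Finset.mem_image, Function.comp]
  constructor
  · rintro ⟨w, hw, rfl⟩
    obtain ⟨u, _, rfl⟩ := Finset.mem_image.1 (hT hw)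
    simpa using hw
  · intro hz
    obtain ⟨u, hu, he⟩ := Finset.mem_image.1 (hT hz)
    exact ⟨z, hz, by omega⟩

lemma unshift_shift {a : ℕ} {U : Finset ℕ} : (U.image (a + ·)).image (fun x => x - a) = U := by
  rw [Finset.image_image]
  have h : ∀ x ∈ U, ((fun x => x - a) ∘ (a + ·)) x = id x := by
    intro x _
    simp [Function.comp]
  rw [Finset.image_congr h, Finset.image_id]

lemma sum_powerset_image {M : Type*} [AddCommMonoid M] (a : ℕ) (S : Finset ℕ)
    (g : Finset ℕ → M) :
    ∑ T ∈ (S.image (a + ·)).powerset, g T = ∑ U ∈ S.powerset, g (U.image (a + ·)) := by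
  classical
  refine Finset.sum_nbij' (fun T => T.image (fun x => x - a)) (fun U => U.image (a + ·))
    ?_ ?_ ?_ ?_ ?_
  · intro T hT
    rw [Finset.mem_powerset] at hT ⊢
    intro z hz
    obtain ⟨w, hw, rfl⟩ := Finset.mem_image.1 hz
    obtain ⟨u, hu, rfl⟩ := Finset.mem_image.1 (hT hw)
    simpa using hu
  · intro U hU
    rw [Finset.mem_powerset] at hU ⊢
    exact Finset.image_subset_image hU
  · intro T hT
    exact shift_unshift (Finset.mem_powerset.1 hT)
  · intro U _
    exact unshift_shift
  · intro T hT
    rw [shift_unshift (Finset.mem_powerset.1 hT)]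

lemma listOf_concat_split {α β : List ℕ} (hα : ∀ x ∈ α, 0 < x) (hα0 : α ≠ [])
    (hβ : ∀ x ∈ β, 0 < x) (hβ0 : β ≠ []) {T₁ U : Finset ℕ}
    (hT₁ : T₁ ⊆ Dlist α) (hU : U ⊆ Dlist β) :
    listOf (α.sum + β.sum) (insert α.sum (T₁ ∪ U.image (α.sum + ·)))
      = listOf α.sum T₁ ++ listOf β.sum U := by
  obtain ⟨a1, a2, a3, a4⟩ := listOf_spec' hα hα0 hT₁
  obtain ⟨b1, b2, b3, b4⟩ := listOf_spec' hβ hβ0 hU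
  have hpos : ∀ x ∈ listOf α.sum T₁ ++ listOf β.sum U, 0 < x := by
    intro x hx
    rcases List.mem_append.1 hx with h | h
    exacts [a1 x h, b1 x h]
  have hne : listOf α.sum T₁ ++ listOf β.sum U ≠ [] := by simp [a2]
  have hsum : (listOf α.sum T₁ ++ listOf β.sum U).sum = α.sum + β.sum := by
    rw [List.sum_append, a3, b3]
  have hD : Dlist (listOf α.sum T₁ ++ listOf β.sum U)
      = insert α.sum (T₁ ∪ U.image (α.sum + ·)) := by
    rw [Dlist_append a2 b2, a4, b4, a3, Finset.union_insert]
  calc listOf (α.sum + β.sum) (insert α.sum (T₁ ∪ U.image (α.sum + ·)))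
      = listOf (listOf α.sum T₁ ++ listOf β.sum U).sum
          (Dlist (listOf α.sum T₁ ++ listOf β.sum U)) := by rw [hsum, hD]
    _ = _ := listOf_recover hpos hne

lemma lhs_eq {α β : List ℕ} (hα : ∀ x ∈ α, 0 < x) (hβ : ∀ x ∈ β, 0 < x)
    (hα0 : α ≠ []) (hβ0 : β ≠ []) :
    HL α * HL β = ∑ T₁ ∈ (Dlist α).powerset, ∑ U ∈ (Dlist β).powerset,
      ((∏ i ∈ Dlist α \ T₁, ((X i : R12) - 1)) * ∏ i ∈ Dlist β \ U, ((X i : R12) - 1)) •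
        (hprod (listOf α.sum T₁) * hprod (listOf β.sum U)) := by
  rw [HL_h hα hα0, HL_h hβ hβ0, Finset.sum_mul]
  refine Finset.sum_congr rfl (fun T₁ _ => ?_)
  rw [Finset.mul_sum]
  refine Finset.sum_congr rfl (fun U _ => ?_)
  rw [smul_mul_smul_comm]

lemma inner_eq {α β : List ℕ} (hα : ∀ x ∈ α, 0 < x) (hβ : ∀ x ∈ β, 0 < x)
    (hα0 : α ≠ []) (hβ0 : β ≠ []) {S : Finset ℕ} (hSD : S ⊆ Dlist β) :
    HL (α ++ listOf β.sum S) + (1 - (X α.sum : R12)) • HL (nearConcat α (listOf β.sum S))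
      = ∑ T₁ ∈ (Dlist α).powerset, ∑ U ∈ S.powerset,
          ((∏ i ∈ Dlist α \ T₁, ((X i : R12) - 1)) *
              ∏ j ∈ S \ U, ((X (α.sum + j) : R12) - 1)) •
            (hprod (listOf α.sum T₁) * hprod (listOf β.sum U)) := by
  classical
  obtain ⟨g1, g2, g3, g4⟩ := listOf_spec' hβ hβ0 hSD
  have happos : ∀ x ∈ α ++ listOf β.sum S, 0 < x := by
    intro x hx
    rcases List.mem_append.1 hx with h | h
    exacts [hα x h, g1 x h]
  have happ0 : α ++ listOf β.sum S ≠ [] := by simp [hα0]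
  obtain ⟨n1, n2, n3, n4⟩ := nearConcat_spec hα hα0 g1 g2
  rw [g3] at n3
  rw [g4] at n4
  have happsum : (α ++ listOf β.sum S).sum = α.sum + β.sum := by
    rw [List.sum_append, g3]
  have hDapp : Dlist (α ++ listOf β.sum S)
      = insert α.sum (Dlist α ∪ S.image (α.sum + ·)) := by
    rw [Dlist_append hα0 g2, g4, Finset.union_insert]
  have hdisj : Disjoint (Dlist α) (S.image (α.sum + ·)) := by
    refine Finset.disjoint_left.2 fun z hz hz' => ?_
    have h1 := (Finset.mem_Ioo.1 (Dlist_subset_Ioo hα hz)).2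
    obtain ⟨u, hu, rfl⟩ := Finset.mem_image.1 hz'
    omega
  have haD : α.sum ∉ Dlist α ∪ S.image (α.sum + ·) := by
    intro h
    rcases Finset.mem_union.1 h with h | h
    · exact absurd (Finset.mem_Ioo.1 (Dlist_subset_Ioo hα h)).2 (lt_irrefl _)
    · obtain ⟨u, hu, he⟩ := Finset.mem_image.1 h
      have := (Finset.mem_Ioo.1 ((hSD.trans (Dlist_subset_Ioo hβ)) hu)).1
      omega
  rw [HL_h happos happ0, HL_h n1 n2, happsum, hDapp, n3, n4]
  rw [insert_sum_combine α.sum _ haD (fun T => hprod (listOf (α.sum + β.sum) T))]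
  rw [powerset_union_sum hdisj (fun T =>
    (∏ i ∈ (Dlist α ∪ S.image (α.sum + ·)) \ T, ((X i : R12) - 1)) •
      hprod (listOf (α.sum + β.sum) (insert α.sum T)))]
  refine Finset.sum_congr rfl fun T₁ hT₁ => ?_
  rw [sum_powerset_image α.sum S (fun T₂ =>
    (∏ i ∈ (Dlist α ∪ S.image (α.sum + ·)) \ (T₁ ∪ T₂), ((X i : R12) - 1)) •
      hprod (listOf (α.sum + β.sum) (insert α.sum (T₁ ∪ T₂))))]
  refine Finset.sum_congr rfl fun U hU => ?_
  have hT₁D := Finset.mem_powerset.1 hT₁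
  have hUS := Finset.mem_powerset.1 hU
  have himgsub : U.image (α.sum + ·) ⊆ S.image (α.sum + ·) :=
    Finset.image_subset_image hUS
  rw [sdiff_union_split hdisj hT₁D himgsub,
    Finset.prod_union (Finset.disjoint_of_subset_left Finset.sdiff_subset
      (Finset.disjoint_of_subset_right Finset.sdiff_subset hdisj)),
    ← Finset.image_sdiff S U (fun x y h => by omega),
    Finset.prod_image (fun x _ y _ h => by omega),
    listOf_concat_split hα hα0 hβ hβ0 hT₁D (hUS.trans hSD),
    hprod_append]


end NSymAux

open NSymAux MvPolynomial

/-- Product formula: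
`H_α · H_β = Σ_{γ ≼ β} (∏_{i ∈ D(β)∖D(γ)} (tᵢ - t_{|α|+i})) (H_{αγ} + (1 - t_{|α|}) H_{α▷γ})`. -/
theorem stmt_12 (α β : List ℕ) (hα : ∀ x ∈ α, 0 < x) (hβ : ∀ x ∈ β, 0 < x)
    (hα0 : α ≠ []) (hβ0 : β ≠ []) :
    HL α * HL β =
      ∑ c : Composition β.length,
        (∏ i ∈ Dlist β \ Dlist (coarsen β c),
            (MvPolynomial.X i - MvPolynomial.X (α.sum + i)) : R12) •
          (HL (α ++ coarsen β c) +
            (1 - (MvPolynomial.X α.sum : R12)) • HL (nearConcat α (coarsen β c))) := by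
  classical
  have hR := sum_comp_eq_sum_powerset (M := NS) hβ hβ0 (fun γ =>
    (∏ i ∈ Dlist β \ Dlist γ, ((X i : R12) - X (α.sum + i))) •
      (HL (α ++ γ) + (1 - (X α.sum : R12)) • HL (nearConcat α γ)))
  rw [hR]
  have step2 : ∀ S ∈ (Dlist β).powerset,
      (∏ i ∈ Dlist β \ Dlist (listOf β.sum S), ((X i : R12) - X (α.sum + i))) •
        (HL (α ++ listOf β.sum S) +
          (1 - (X α.sum : R12)) • HL (nearConcat α (listOf β.sum S)))
      = ∑ T₁ ∈ (Dlist α).powerset, ∑ U ∈ S.powerset,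
          ((∏ i ∈ Dlist α \ T₁, ((X i : R12) - 1)) *
              ((∏ j ∈ S \ U, ((X (α.sum + j) : R12) - 1)) *
                ∏ i ∈ Dlist β \ S, ((X i : R12) - X (α.sum + i)))) •
            (hprod (listOf α.sum T₁) * hprod (listOf β.sum U)) := by
    intro S hS
    have hSD := Finset.mem_powerset.1 hS
    rw [(listOf_spec' hβ hβ0 hSD).2.2.2, inner_eq hα hβ hα0 hβ0 hSD, Finset.smul_sum]
    refine Finset.sum_congr rfl fun T₁ _ => ?_
    rw [Finset.smul_sum]
    refine Finset.sum_congr rfl fun U _ => ?_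
    rw [smul_smul]
    congr 1
    ring
  rw [Finset.sum_congr rfl step2, lhs_eq hα hβ hα0 hβ0]
  conv_rhs => rw [Finset.sum_comm]
  refine Finset.sum_congr rfl fun T₁ _ => ?_
  have hswap := powerset_sum_swap (Dlist β) (fun S U =>
    ((∏ i ∈ Dlist α \ T₁, ((X i : R12) - 1)) *
        ((∏ j ∈ S \ U, ((X (α.sum + j) : R12) - 1)) *
          ∏ i ∈ Dlist β \ S, ((X i : R12) - X (α.sum + i)))) •
      (hprod (listOf α.sum T₁) * hprod (listOf β.sum U)))
  rw [hswap]
  refine Finset.sum_congr rfl fun U hU => ?_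
  have hUD := Finset.mem_powerset.1 hU
  have e : ∀ V ∈ (Dlist β \ U).powerset,
      ((∏ i ∈ Dlist α \ T₁, ((X i : R12) - 1)) *
          ((∏ j ∈ (U ∪ V) \ U, ((X (α.sum + j) : R12) - 1)) *
            ∏ i ∈ Dlist β \ (U ∪ V), ((X i : R12) - X (α.sum + i)))) •
        (hprod (listOf α.sum T₁) * hprod (listOf β.sum U))
      = ((∏ i ∈ Dlist α \ T₁, ((X i : R12) - 1)) *
          ((∏ j ∈ V, ((X (α.sum + j) : R12) - 1)) *
            ∏ i ∈ (Dlist β \ U) \ V, ((X i : R12) - X (α.sum + i)))) •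
        (hprod (listOf α.sum T₁) * hprod (listOf β.sum U)) := by
    intro V hV
    have hVsub := Finset.mem_powerset.1 hV
    have hdUV : Disjoint U V := Finset.disjoint_left.2
      (fun z hzU hzV => (Finset.mem_sdiff.1 (hVsub hzV)).2 hzU)
    have h1 : (U ∪ V) \ U = V := Finset.union_sdiff_cancel_left hdUV
    have h2 : Dlist β \ (U ∪ V) = (Dlist β \ U) \ V := by
      ext z
      simp only [Finset.mem_sdiff, Finset.mem_union, not_or]
      tauto
    rw [h1, h2]
  rw [Finset.sum_congr rfl e, ← Finset.sum_smul]
  congr 1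
  rw [← Finset.mul_sum]
  congr 1
  exact (claimC (Dlist β \ U) α.sum).symm
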